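/- (Area of the butterfly region) For every θ ∈ (0,1/2), the two-dimensional Lebesgue measure of the butterfly region B_θ equals θ(1-2θ)/(1-θ). -/

import Mathlib

open MeasureTheory Set

/-- The butterfly region `B_θ`: points of `[0,1]²` lying weakly between the lines
`l₁ : y = θ̂(1-x)` and `l₂ : x = θ̂(1-y)`, where `θ̂ = θ/(1-θ)`. -/
def butterfly (θ : ℝ) : Set (ℝ × ℝ) :=
  {p | p.1 ∈ Set.Icc (0:ℝ) 1 ∧ p.2 ∈ Set.Icc (0:ℝ) 1 ∧
    ((θ / (1 - θ) * (1 - p.1) ≤ p.2 ∧ p.1 ≤ θ / (1 - θ) * (1 - p.2)) ∨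
     (p.2 ≤ θ / (1 - θ) * (1 - p.1) ∧ θ / (1 - θ) * (1 - p.2) ≤ p.1))}

/-- The (upper) wing of the butterfly, in division-free form. -/
def wing (θ : ℝ) : Set (ℝ × ℝ) :=
  {p | p.1 ∈ Set.Icc (0:ℝ) θ ∧ θ * (1 - p.1) ≤ p.2 * (1 - θ) ∧ p.1 * (1 - θ) ≤ θ * (1 - p.2)}

lemma wing_measurable (θ : ℝ) : MeasurableSet (wing θ) := by
  have : wing θ = ({p : ℝ × ℝ | 0 ≤ p.1} ∩ {p | p.1 ≤ θ}) ∩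
      ({p : ℝ × ℝ | θ * (1 - p.1) ≤ p.2 * (1 - θ)} ∩
       {p : ℝ × ℝ | p.1 * (1 - θ) ≤ θ * (1 - p.2)}) := by
    ext p; simp [wing, Set.mem_Icc]
  rw [this]
  refine MeasurableSet.inter (MeasurableSet.inter ?_ ?_) (MeasurableSet.inter ?_ ?_)
  · exact measurableSet_le measurable_const measurable_fst
  · exact measurableSet_le measurable_fst measurable_const
  · exact measurableSet_le (by fun_prop) (by fun_prop)
  · exact measurableSet_le (by fun_prop) (by fun_prop)

lemma butterfly_eq_union (θ : ℝ) (hθ : θ ∈ Set.Ioo (0:ℝ) (1/2)) :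
    butterfly θ = wing θ ∪ Prod.swap ⁻¹' wing θ := by
  obtain ⟨hθ0, hθ2⟩ := hθ
  have h1θ : (0:ℝ) < 1 - θ := by linarith
  have key : ∀ a b : ℝ, θ / (1 - θ) * a ≤ b ↔ θ * a ≤ b * (1 - θ) := by
    intro a b
    rw [div_mul_eq_mul_div, div_le_iff₀ h1θ]
  have key' : ∀ a b : ℝ, b ≤ θ / (1 - θ) * a ↔ b * (1 - θ) ≤ θ * a := by
    intro a b
    rw [div_mul_eq_mul_div, le_div_iff₀ h1θ]
  ext ⟨x, y⟩
  simp only [butterfly, wing, Set.mem_setOf_eq, Set.mem_Icc, Set.mem_union, Set.mem_preimage,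
    Prod.fst_swap, Prod.snd_swap, key, key']
  constructor
  · rintro ⟨⟨hx0, hx1⟩, ⟨hy0, hy1⟩, h | h⟩
    · left
      refine ⟨⟨hx0, ?_⟩, h.1, h.2⟩
      nlinarith [h.1, h.2]
    · right
      refine ⟨⟨hy0, ?_⟩, h.2, h.1⟩
      nlinarith [h.1, h.2]
  · rintro (⟨⟨hx0, hxθ⟩, h1, h2⟩ | ⟨⟨hy0, hyθ⟩, h1, h2⟩)
    · refine ⟨⟨hx0, by linarith⟩, ⟨?_, ?_⟩, Or.inl ⟨h1, h2⟩⟩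
      · nlinarith
      · nlinarith
    · refine ⟨⟨?_, ?_⟩, ⟨hy0, by linarith⟩, Or.inr ⟨h2, h1⟩⟩
      · nlinarith
      · nlinarith

lemma wing_volume (θ : ℝ) (hθ : θ ∈ Set.Ioo (0:ℝ) (1/2)) :
    MeasureTheory.volume (wing θ) = ENNReal.ofReal (θ * (1 - 2 * θ) / (2 * (1 - θ))) := by
  obtain ⟨hθ0, hθ2⟩ := hθ
  have h1θ : (0:ℝ) < 1 - θ := by linarith
  set a : ℝ → ℝ := fun x => θ * (1 - x) / (1 - θ) with ha
  set b : ℝ → ℝ := fun x => (θ - x * (1 - θ)) / θ with hb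
  have hslice : ∀ x : ℝ, (Prod.mk x ⁻¹' wing θ) =
      if x ∈ Set.Icc (0:ℝ) θ then Set.Icc (a x) (b x) else ∅ := by
    intro x
    by_cases hx : x ∈ Set.Icc (0:ℝ) θ
    · simp only [hx, if_true]
      obtain ⟨hx0, hxθ⟩ := hx
      ext y
      simp only [Set.mem_preimage, wing, Set.mem_setOf_eq, Set.mem_Icc, ha, hb]
      constructor
      · rintro ⟨_, h1, h2⟩
        constructor
        · rw [div_le_iff₀ h1θ]; linarith
        · rw [le_div_iff₀ hθ0]; nlinarith
      · rintro ⟨h1, h2⟩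
        rw [div_le_iff₀ h1θ] at h1
        rw [le_div_iff₀ hθ0] at h2
        exact ⟨⟨hx0, hxθ⟩, by nlinarith, by nlinarith⟩
    · simp only [hx, if_false]
      ext y
      simp only [Set.mem_preimage, wing, Set.mem_setOf_eq, hx, false_and, Set.mem_empty_iff_false]
  have hWm := wing_measurable θ
  rw [MeasureTheory.Measure.volume_eq_prod, MeasureTheory.Measure.prod_apply hWm]
  have hcalc : ∀ x : ℝ, MeasureTheory.volume (Prod.mk x ⁻¹' wing θ) =
      Set.indicator (Set.Icc (0:ℝ) θ) (fun x => ENNReal.ofReal (b x - a x)) x := by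
    intro x
    rw [hslice x]
    by_cases hx : x ∈ Set.Icc (0:ℝ) θ
    · simp [hx, Real.volume_Icc]
    · simp [hx]
  simp only [hcalc]
  rw [MeasureTheory.lintegral_indicator measurableSet_Icc]
  have hcont : Continuous (fun x : ℝ => b x - a x) := by
    apply Continuous.sub
    · exact (continuous_const.sub (continuous_id.mul continuous_const)).div_const θ
    · exact (continuous_const.mul (continuous_const.sub continuous_id)).div_const (1 - θ)
  have hint : MeasureTheory.IntegrableOn (fun x : ℝ => b x - a x) (Set.Icc 0 θ) := by
    exact hcont.integrableOn_Icc
  have hnn : 0 ≤ᵐ[MeasureTheory.volume.restrict (Set.Icc (0:ℝ) θ)]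
      (fun x : ℝ => b x - a x) := by
    filter_upwards [MeasureTheory.ae_restrict_mem measurableSet_Icc] with x hx
    obtain ⟨hx0, hxθ⟩ := hx
    show (0:ℝ) ≤ b x - a x
    rw [sub_nonneg, ha, hb, div_le_div_iff₀ h1θ hθ0]
    nlinarith
  rw [← MeasureTheory.ofReal_integral_eq_lintegral_ofReal hint hnn]
  congr 1
  rw [MeasureTheory.integral_Icc_eq_integral_Ioc,
    ← intervalIntegral.integral_of_le (le_of_lt hθ0)]
  have heq : ∀ x : ℝ, b x - a x =
      (1 - 2 * θ) / (1 - θ) + ((2 * θ - 1) / (θ * (1 - θ))) * x := by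
    intro x
    rw [hb, ha]
    field_simp
    ring
  rw [intervalIntegral.integral_congr (fun x _ => heq x)]
  rw [intervalIntegral.integral_add intervalIntegrable_const
    (intervalIntegral.intervalIntegrable_id.const_mul _), intervalIntegral.integral_const_mul,
    integral_id, intervalIntegral.integral_const]
  simp only [smul_eq_mul, sub_zero]
  field_simp
  ring

theorem butterfly_area (θ : ℝ) (hθ : θ ∈ Set.Ioo (0:ℝ) (1/2)) :
    MeasureTheory.volume (butterfly θ) = ENNReal.ofReal (θ * (1 - 2 * θ) / (1 - θ)) := by
  obtain ⟨hθ0, hθ2⟩ := hθ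
  have h1θ : (0:ℝ) < 1 - θ := by linarith
  rw [butterfly_eq_union θ ⟨hθ0, hθ2⟩]
  have hWm := wing_measurable θ
  have hWm' : MeasurableSet (Prod.swap ⁻¹' wing θ) := hWm.preimage measurable_swap
  have hinter : wing θ ∩ Prod.swap ⁻¹' wing θ ⊆ {((θ:ℝ), (θ:ℝ))} := by
    rintro ⟨x, y⟩ ⟨⟨⟨hx0, hxθ⟩, h1, h2⟩, ⟨⟨hy0, hyθ⟩, h3, h4⟩⟩
    simp only [Prod.fst_swap, Prod.snd_swap] at h3 h4
    have hy : y = θ := by nlinarith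
    have hx : x = θ := by nlinarith
    simp [hx, hy]
  have hnull : MeasureTheory.volume (wing θ ∩ Prod.swap ⁻¹' wing θ) = 0 := by
    refine le_antisymm (le_trans (MeasureTheory.measure_mono hinter) ?_) (zero_le)
    have : ({((θ:ℝ), (θ:ℝ))} : Set (ℝ × ℝ)) = {(θ:ℝ)} ×ˢ {(θ:ℝ)} := by
      simp [Set.singleton_prod_singleton]
    rw [this, MeasureTheory.Measure.volume_eq_prod, MeasureTheory.Measure.prod_prod]
    simp
  rw [MeasureTheory.measure_union₀ hWm'.nullMeasurableSet hnull]
  have hswap : MeasureTheory.volume (Prod.swap ⁻¹' wing θ) = MeasureTheory.volume (wing θ) := by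
    rw [MeasureTheory.Measure.volume_eq_prod]
    exact MeasureTheory.Measure.measurePreserving_swap.measure_preimage
      hWm.nullMeasurableSet
  have hR : (0:ℝ) ≤ θ * (1 - 2 * θ) / (2 * (1 - θ)) := by
    apply div_nonneg <;> nlinarith
  rw [hswap, wing_volume θ ⟨hθ0, hθ2⟩, ← ENNReal.ofReal_add hR hR]
  congr 1
  field_simp
  ring
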